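/- Let F be a field, and let b, a, d be positive integers with a > sqrt(2·d·b). Given b distinct pairs (x_i, y_i) in F × F, the number of polynomials g ∈ F[x] of degree at most d such that g(x_i) = y_i for at least a of the indices i is at most 2·b/a. -/

import Mathlib

open Polynomial

/-- Sudan's list-size bound for Reed–Solomon codes: given `b` distinct pairs in `F × F`
and `a > sqrt(2·d·b)`, there are at most `2·b/a` polynomials of degree at most `d` that
agree with at least `a` of the pairs. -/
theorem stmt1 {F : Type*} [Field F] [DecidableEq F] (b a d : ℕ)
    (hb : 0 < b) (ha : 0 < a) (hd : 0 < d)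
    (hagt : Real.sqrt (2 * d * b) < (a : ℝ))
    (pts : Fin b → F × F) (hdist : Function.Injective pts) :
    let S : Set (Polynomial F) :=
      {g : Polynomial F | g.natDegree ≤ d ∧
        a ≤ (Finset.univ.filter fun i : Fin b =>
              Polynomial.eval (pts i).1 g = (pts i).2).card}
    S.Finite ∧ (S.ncard : ℝ) ≤ 2 * b / a := by
  intro S
  classical
  set A : Polynomial F → Finset (Fin b) :=
    fun g => Finset.univ.filter fun i => Polynomial.eval (pts i).1 g = (pts i).2 with hA
  have hmemS : ∀ g : Polynomial F, g ∈ S ↔ g.natDegree ≤ d ∧ a ≤ (A g).card := fun g => Iff.rfl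
  -- squaring the hypothesis
  have hsq : 2 * d * b < a * a := by
    have h1 : (2 * d * b : ℝ) < (a : ℝ) ^ 2 := by
      have := Real.lt_sq_of_sqrt_lt hagt
      exact this
    have : ((2 * d * b : ℕ) : ℝ) < ((a * a : ℕ) : ℝ) := by push_cast; nlinarith
    exact_mod_cast this
  -- injectivity of first coordinates within an agreement set
  have hinjA : ∀ g : Polynomial F, ∀ i ∈ A g, ∀ j ∈ A g,
      (pts i).1 = (pts j).1 → i = j := by
    intro g i hi j hj hij
    simp only [hA, Finset.mem_filter, Finset.mem_univ, true_and] at hi hj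
    apply hdist
    have h2 : (pts i).2 = (pts j).2 := by rw [← hi, ← hj, hij]
    exact Prod.ext hij h2
  -- intersection bound
  have hinter : ∀ g h : Polynomial F, g ∈ S → h ∈ S → g ≠ h → (A g ∩ A h).card ≤ d := by
    intro g h hg hh hne
    have hsub : g - h ≠ 0 := sub_ne_zero.mpr hne
    have hcard : (A g ∩ A h).card ≤ (g - h).roots.toFinset.card := by
      apply Finset.card_le_card_of_injOn (fun i => (pts i).1)
      · intro i hi
        have hi' := hi
        simp only [Finset.mem_coe, Finset.mem_inter, hA, Finset.mem_filter, Finset.mem_univ, true_and] at hi'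
        simp only [Multiset.mem_toFinset, mem_roots hsub]
        simp [hi'.1, hi'.2, hsub]
      · intro i hi j hj hij
        have hi' : i ∈ A g := (Finset.mem_inter.mp hi).1
        have hj' : j ∈ A g := (Finset.mem_inter.mp hj).1
        exact hinjA g i hi' j hj' hij
    calc (A g ∩ A h).card ≤ (g - h).roots.toFinset.card := hcard
      _ ≤ Multiset.card (g - h).roots := Multiset.toFinset_card_le _
      _ ≤ (g - h).natDegree := Polynomial.card_roots' _
      _ ≤ max g.natDegree h.natDegree := Polynomial.natDegree_sub_le g h
      _ ≤ d := max_le hg.1 hh.1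
  -- key counting lemma
  have hkey : ∀ T : Finset (Polynomial F), ↑T ⊆ S →
      T.card * a ≤ (T.biUnion A).card + (∑ k ∈ Finset.range T.card, k) * d := by
    intro T
    induction T using Finset.induction_on with
    | empty => simp
    | @insert g' T' hg ih =>
      intro hsub
      have hsubT' : ↑T' ⊆ S := fun x hx => hsub (by simp [hx])
      have hgS : g' ∈ S := hsub (by simp)
      have ih' := ih hsubT'
      have hcardins : (insert g' T').card = T'.card + 1 := Finset.card_insert_of_notMem hg
      have hbu : (insert g' T').biUnion A = A g' ∪ T'.biUnion A := Finset.biUnion_insert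
      have hunion : (A g' ∪ T'.biUnion A).card + (A g' ∩ T'.biUnion A).card
          = (A g').card + (T'.biUnion A).card := Finset.card_union_add_card_inter _ _
      have hint : (A g' ∩ T'.biUnion A).card ≤ T'.card * d := by
        have hsubset : A g' ∩ T'.biUnion A ⊆ T'.biUnion (fun h => A g' ∩ A h) := by
          intro i hi
          rw [Finset.mem_inter, Finset.mem_biUnion] at hi
          obtain ⟨hi1, h, hh, hi2⟩ := hi
          exact Finset.mem_biUnion.mpr ⟨h, hh, Finset.mem_inter.mpr ⟨hi1, hi2⟩⟩
        calc (A g' ∩ T'.biUnion A).card ≤ (T'.biUnion (fun h => A g' ∩ A h)).card :=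
              Finset.card_le_card hsubset
          _ ≤ ∑ h ∈ T', (A g' ∩ A h).card := Finset.card_biUnion_le
          _ ≤ ∑ _h ∈ T', d := by
              apply Finset.sum_le_sum
              intro h hh
              exact hinter g' h hgS (hsubT' hh) (fun he => hg (he ▸ hh))
          _ = T'.card * d := by rw [Finset.sum_const, smul_eq_mul]
      have haAg : a ≤ (A g').card := hgS.2
      rw [hcardins, hbu, Finset.sum_range_succ]
      calc (T'.card + 1) * a = T'.card * a + a := by ring
        _ ≤ ((T'.biUnion A).card + (∑ k ∈ Finset.range T'.card, k) * d) + (A g').card := by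
            omega
        _ = (A g' ∪ T'.biUnion A).card + (A g' ∩ T'.biUnion A).card
            + (∑ k ∈ Finset.range T'.card, k) * d := by omega
        _ ≤ (A g' ∪ T'.biUnion A).card + T'.card * d
            + (∑ k ∈ Finset.range T'.card, k) * d := by omega
        _ = (A g' ∪ T'.biUnion A).card + (∑ k ∈ Finset.range T'.card, k + T'.card) * d := by ring
  -- every finset inside S has card * a ≤ 2 * b
  have hfin : ∀ T : Finset (Polynomial F), ↑T ⊆ S → T.card * a ≤ 2 * b := by
    intro T hT
    by_contra hcon
    push_neg at hcon
    set L := 2 * b / a + 1 with hL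
    have hLa : 2 * b < L * a := by
      rw [hL]
      exact (Nat.div_lt_iff_lt_mul ha).mp (Nat.lt_succ_self _)
    have hL1a : (L - 1) * a ≤ 2 * b := by
      simp only [hL, Nat.add_sub_cancel]
      exact Nat.div_mul_le_self _ _
    have hLle : L ≤ T.card := by
      by_contra hc
      push_neg at hc
      have : T.card * a ≤ 2 * b := by
        have : T.card ≤ L - 1 := by omega
        calc T.card * a ≤ (L - 1) * a := Nat.mul_le_mul_right _ this
          _ ≤ 2 * b := hL1a
      omega
    obtain ⟨T'', hT''sub, hT''card⟩ := Finset.exists_subset_card_eq hLle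
    have hkey' := hkey T'' (fun x hx => hT (hT''sub hx))
    rw [hT''card] at hkey'
    have hUb : (T''.biUnion A).card ≤ b := by
      calc (T''.biUnion A).card ≤ (Finset.univ : Finset (Fin b)).card :=
        Finset.card_le_card (Finset.subset_univ _)
        _ = b := Finset.card_univ.trans (Fintype.card_fin b)
    have hgauss : (∑ k ∈ Finset.range L, k) * 2 = L * (L - 1) :=
      Finset.sum_range_id_mul_two L
    -- (L-1)*d < a
    have hLd : (L - 1) * d < a := by
      have h1 : (L - 1) * a * d ≤ 2 * b * d := Nat.mul_le_mul_right d hL1a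
      have h2 : 2 * b * d < a * a := by
        rw [show 2 * b * d = 2 * d * b by ring]; exact hsq
      have h3 : (L - 1) * d * a < a * a := by
        calc (L - 1) * d * a = (L - 1) * a * d := by ring
          _ ≤ 2 * b * d := h1
          _ < a * a := h2
      exact Nat.lt_of_mul_lt_mul_right h3
    have hLpos : 0 < L := by rw [hL]; exact Nat.succ_pos _
    have h4 : L * ((L - 1) * d) < L * a := Nat.mul_lt_mul_of_pos_left hLd hLpos
    have h5 : 2 * (L * a) ≤ 2 * b + ((∑ k ∈ Finset.range L, k) * 2) * d := by
      calc 2 * (L * a) ≤ 2 * ((T''.biUnion A).card + (∑ k ∈ Finset.range L, k) * d) :=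
            Nat.mul_le_mul_left 2 hkey'
        _ = 2 * (T''.biUnion A).card + ((∑ k ∈ Finset.range L, k) * 2) * d := by ring
        _ ≤ 2 * b + ((∑ k ∈ Finset.range L, k) * 2) * d := by omega
    rw [hgauss] at h5
    have h6 : L * (L - 1) * d = L * ((L - 1) * d) := by ring
    omega
  -- finiteness
  have hSfin : S.Finite := by
    by_contra hinf
    obtain ⟨T, hTsub, hTcard⟩ :=
      Set.Infinite.exists_subset_card_eq hinf (2 * b / a + 1)
    have := hfin T hTsub
    rw [hTcard] at this
    have : 2 * b < (2 * b / a + 1) * a := (Nat.div_lt_iff_lt_mul ha).mp (Nat.lt_succ_self _)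
    omega
  refine ⟨hSfin, ?_⟩
  have hcard : S.ncard * a ≤ 2 * b := by
    have := hfin hSfin.toFinset (by simp)
    rwa [← Set.ncard_eq_toFinset_card S hSfin] at this
  have hapos : (0:ℝ) < a := by exact_mod_cast ha
  rw [le_div_iff₀ hapos]
  have : ((S.ncard * a : ℕ) : ℝ) ≤ ((2 * b : ℕ) : ℝ) := by exact_mod_cast hcard
  push_cast at this
  linarith
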